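/- Let δ ≥ 4 be an integer. For every i ∈ {1,…,6} and every P ∈ ℤ³ such that the tetrahedron Tⁱ_P is contained in the simplex Γ_δ, it is impossible that Tⁱ_P has an edge contained in each of the four facets of Γ_δ; that is, there do not simultaneously exist edges e₁, e₂, e₃, e₄ of Tⁱ_P (segments joining two of its vertices) with e₁ contained in the plane {x₁ = 0}, e₂ contained in {x₂ = 0}, e₃ contained in {x₃ = 0}, and e₄ contained in {x₁ + x₂ + x₃ = δ}. -/
import Mathlib


/-- The vertices of the six tetrahedra `Tⁱ_P` subdividing the unit cube with lowest corner
`P = (p,q,r)`, as integer points. -/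
def tetVerts (i : Fin 6) (p q r : ℤ) : Fin 4 → (Fin 3 → ℤ) :=
  match i with
  | 0 => ![![p, q, r], ![p + 1, q, r], ![p, q + 1, r], ![p, q, r + 1]]
  | 1 => ![![p + 1, q + 1, r], ![p + 1, q, r], ![p, q + 1, r], ![p, q, r + 1]]
  | 2 => ![![p + 1, q, r], ![p + 1, q + 1, r], ![p, q, r + 1], ![p + 1, q, r + 1]]
  | 3 => ![![p, q + 1, r], ![p + 1, q + 1, r], ![p, q, r + 1], ![p, q + 1, r + 1]]
  | 4 => ![![p + 1, q + 1, r], ![p + 1, q, r + 1], ![p, q + 1, r + 1], ![p, q, r + 1]]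
  | 5 => ![![p + 1, q + 1, r], ![p + 1, q, r + 1], ![p, q + 1, r + 1], ![p + 1, q + 1, r + 1]]

/-- The tetrahedron `Tⁱ_P ⊆ ℝ³`: the convex hull of its four vertices. -/
noncomputable def tet (i : Fin 6) (p q r : ℤ) : Set (Fin 3 → ℝ) :=
  convexHull ℝ (Set.range fun a : Fin 4 => fun k : Fin 3 => ((tetVerts i p q r a k : ℤ) : ℝ))

/-- The simplex `Γ_δ` with vertices `(0,0,0), (δ,0,0), (0,δ,0), (0,0,δ)`. -/
def Gammaδ (δ : ℤ) : Set (Fin 3 → ℝ) :=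
  {x | 0 ≤ x 0 ∧ 0 ≤ x 1 ∧ 0 ≤ x 2 ∧ x 0 + x 1 + x 2 ≤ (δ : ℝ)}

/-- For `δ ≥ 4`, no tetrahedron `Tⁱ_P` contained in `Γ_δ` can have an edge in each of the four
facets of `Γ_δ` (i.e., there are no subcomplexes of type 3I in the subdivision `S_{α,δ}`). -/
theorem no_tet_with_four_exits (δ : ℤ) (hδ : 4 ≤ δ) (i : Fin 6) (p q r : ℤ)
    (hsub : tet i p q r ⊆ Gammaδ δ) :
    ¬ ((∃ a b : Fin 4, a ≠ b ∧ tetVerts i p q r a 0 = 0 ∧ tetVerts i p q r b 0 = 0) ∧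
       (∃ a b : Fin 4, a ≠ b ∧ tetVerts i p q r a 1 = 0 ∧ tetVerts i p q r b 1 = 0) ∧
       (∃ a b : Fin 4, a ≠ b ∧ tetVerts i p q r a 2 = 0 ∧ tetVerts i p q r b 2 = 0) ∧
       (∃ a b : Fin 4, a ≠ b ∧
         tetVerts i p q r a 0 + tetVerts i p q r a 1 + tetVerts i p q r a 2 = δ ∧
         tetVerts i p q r b 0 + tetVerts i p q r b 1 + tetVerts i p q r b 2 = δ)) := by
  rintro ⟨⟨a1, b1, -, h1, -⟩, ⟨a2, b2, -, h2, -⟩, ⟨a3, b3, -, h3, -⟩, ⟨a4, b4, -, h4, -⟩⟩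
  have hv : ∀ a : Fin 4, (0:ℤ) ≤ tetVerts i p q r a 0 ∧ 0 ≤ tetVerts i p q r a 1 ∧
      0 ≤ tetVerts i p q r a 2 ∧
      tetVerts i p q r a 0 + tetVerts i p q r a 1 + tetVerts i p q r a 2 ≤ δ := by
    intro a
    have h := hsub (subset_convexHull ℝ _ (Set.mem_range_self a))
    simp only [Gammaδ, Set.mem_setOf_eq] at h
    obtain ⟨h0, h1, h2, h3⟩ := h
    refine ⟨by exact_mod_cast h0, by exact_mod_cast h1, by exact_mod_cast h2, by exact_mod_cast h3⟩
  have hv0 := hv 0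
  have hv1 := hv 1
  have hv2 := hv 2
  have hv3 := hv 3
  clear hv hsub
  have hp : p = 0 := by
    fin_cases i <;> fin_cases a1 <;>
      simp only [tetVerts, Fin.reduceFinMk, Matrix.cons_val_zero, Matrix.cons_val_one,
        Matrix.cons_val_two, Matrix.cons_val_three, Matrix.head_cons, Matrix.tail_cons,
        Fin.isValue]
        at h1 hv0 hv1 hv2 hv3 <;> omega
  have hq : q = 0 := by
    fin_cases i <;> fin_cases a2 <;>
      simp only [tetVerts, Fin.reduceFinMk, Matrix.cons_val_zero, Matrix.cons_val_one,
        Matrix.cons_val_two, Matrix.cons_val_three, Matrix.head_cons, Matrix.tail_cons,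
        Fin.isValue]
        at h2 hv0 hv1 hv2 hv3 <;> omega
  have hr : r = 0 := by
    fin_cases i <;> fin_cases a3 <;>
      simp only [tetVerts, Fin.reduceFinMk, Matrix.cons_val_zero, Matrix.cons_val_one,
        Matrix.cons_val_two, Matrix.cons_val_three, Matrix.head_cons, Matrix.tail_cons,
        Fin.isValue]
        at h3 hv0 hv1 hv2 hv3 <;> omega
  subst hp hq hr
  fin_cases i <;> fin_cases a4 <;>
    simp only [tetVerts, Fin.reduceFinMk, Matrix.cons_val_zero, Matrix.cons_val_one,
      Matrix.cons_val_two, Matrix.cons_val_three, Matrix.head_cons, Matrix.tail_cons,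
      Fin.isValue] at h4 hv0 hv1 hv2 hv3 <;> omega
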